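/- For every positive integer n, λ(1, 7; 2n+1) = (1/2) · Σ_{(x,y) ∈ ℤ², x² + 7y² = 2n+1} (x² − 7y²), where the sum is over all integer pairs (x, y) with x² + 7y² = 2n + 1. -/

import Mathlib

/-- `lam a b N` is λ(a, b; N+1): the finite sum of x·y over all integer pairs (x, y)
with x ≡ y ≡ 1 (mod 4) and a·x² + b·y² = 8N + a + b. -/
noncomputable def lam (a b N : ℤ) : ℤ :=
  ∑ᶠ xy ∈ {xy : ℤ × ℤ | xy.1 % 4 = 1 ∧ xy.2 % 4 = 1 ∧
      a * xy.1 ^ 2 + b * xy.2 ^ 2 = 8 * N + a + b}, xy.1 * xy.2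

private lemma finB (M : ℤ) : {p : ℤ × ℤ | p.1 ^ 2 + 7 * p.2 ^ 2 = M}.Finite := by
  apply Set.Finite.subset (Set.finite_Icc (-M, -M) (M, M))
  rintro ⟨x, y⟩ h
  simp only [Set.mem_setOf_eq] at h
  simp only [Set.mem_Icc, Prod.mk_le_mk]
  refine ⟨⟨?_, ?_⟩, ?_, ?_⟩ <;> nlinarith [sq_nonneg (x+1), sq_nonneg (x-1), sq_nonneg (y+1), sq_nonneg (y-1), sq_nonneg x, sq_nonneg y]

private lemma key_div (x y n : ℤ) (hx : x % 4 = 1) (hy : y % 4 = 1)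
    (h : x ^ 2 + 7 * y ^ 2 = 16 * n + 8) : (y - x) % 8 = 0 := by
  obtain ⟨a, ha⟩ : ∃ a, x = 4 * a + 1 := ⟨x / 4, by omega⟩
  obtain ⟨b, hb⟩ : ∃ b, y = 4 * b + 1 := ⟨y / 4, by omega⟩
  subst ha hb
  have h8 : (8 : ℤ) * (a + 7 * b) = 8 * (2 * (n - a ^ 2 - 7 * b ^ 2)) := by ring_nf; linarith [h]
  have h2 : a + 7 * b = 2 * (n - a ^ 2 - 7 * b ^ 2) := by
    exact mul_left_cancel₀ (by norm_num) h8
  obtain ⟨c, hc⟩ : ∃ c, a + 7 * b = 2 * c := ⟨_, h2⟩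
  omega

private lemma odd_parity (x y n : ℤ) (h : x ^ 2 + 7 * y ^ 2 = 2 * n + 1) :
    (x + y) % 2 = 1 := by
  obtain ⟨u, hu⟩ := Int.even_mul_succ_self x
  obtain ⟨v, hv⟩ := Int.even_mul_succ_self y
  have hx2 : x ^ 2 = 2 * u - x := by linear_combination hu
  have hy2 : y ^ 2 = 2 * v - y := by linear_combination hv
  rw [hx2, hy2] at h
  omega

theorem stmt13 (n : ℕ) (hn : 0 < n) :
    2 * lam 1 7 (2 * (n : ℤ)) =
      ∑ᶠ xy ∈ {xy : ℤ × ℤ | xy.1 ^ 2 + 7 * xy.2 ^ 2 = 2 * (n : ℤ) + 1},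
        (xy.1 ^ 2 - 7 * xy.2 ^ 2) := by
  classical
  set N : ℤ := (n : ℤ)
  have hA : ({xy : ℤ × ℤ | xy.1 % 4 = 1 ∧ xy.2 % 4 = 1 ∧
      1 * xy.1 ^ 2 + 7 * xy.2 ^ 2 = 8 * (2 * N) + 1 + 7}).Finite := by
    apply (finB (16 * N + 8)).subset
    rintro ⟨x, y⟩ ⟨-, -, h⟩
    simp only [Set.mem_setOf_eq]; linarith
  have hB : ({xy : ℤ × ℤ | xy.1 ^ 2 + 7 * xy.2 ^ 2 = 2 * N + 1}).Finite := finB _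
  rw [lam, finsum_mem_eq_finite_toFinset_sum _ hA, finsum_mem_eq_finite_toFinset_sum _ hB]
  set FA := hA.toFinset with hFA
  set FB := hB.toFinset with hFB
  have memA : ∀ p : ℤ × ℤ, p ∈ FA ↔
      (p.1 % 4 = 1 ∧ p.2 % 4 = 1 ∧ p.1 ^ 2 + 7 * p.2 ^ 2 = 16 * N + 8) := by
    intro p
    rw [hFA, Set.Finite.mem_toFinset]
    simp only [Set.mem_setOf_eq]
    constructor <;> rintro ⟨h1, h2, h3⟩ <;> exact ⟨h1, h2, by linarith⟩
  have memB : ∀ p : ℤ × ℤ, p ∈ FB ↔ p.1 ^ 2 + 7 * p.2 ^ 2 = 2 * N + 1 := by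
    intro p; rw [hFB, Set.Finite.mem_toFinset]; rfl
  -- sum of XY over FB is 0
  have hXY : ∑ p ∈ FB, p.1 * p.2 = 0 := by
    have h1 : ∑ p ∈ FB, p.1 * p.2 = ∑ p ∈ FB, -(p.1 * p.2) := by
      apply Finset.sum_nbij' (fun p => (p.1, -p.2)) (fun p => (p.1, -p.2))
      · intro p hp; rw [memB] at hp ⊢; simp only; linarith
      · intro p hp; rw [memB] at hp ⊢; simp only; linarith
      · intro p _; simp
      · intro p _; simp
      · intro p _; simp only; ring
    have h2 : ∑ p ∈ FB, -(p.1 * p.2) = -∑ p ∈ FB, p.1 * p.2 := Finset.sum_neg_distrib _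
    omega
  -- split FB
  set q : ℤ × ℤ → Prop := fun p => (p.1 + p.2) % 4 = 1 with hq
  have hsplit := Finset.sum_filter_add_sum_filter_not FB q
      (fun p => p.1 ^ 2 - 6 * p.1 * p.2 - 7 * p.2 ^ 2)
  -- the not-filter equals the filter sum via negation
  have hneg : ∑ p ∈ FB.filter (fun p => ¬ q p), (p.1 ^ 2 - 6 * p.1 * p.2 - 7 * p.2 ^ 2)
      = ∑ p ∈ FB.filter q, (p.1 ^ 2 - 6 * p.1 * p.2 - 7 * p.2 ^ 2) := by
    apply Finset.sum_nbij' (fun p => (-p.1, -p.2)) (fun p => (-p.1, -p.2))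
    · rintro ⟨x, y⟩ hp
      rw [Finset.mem_filter, memB] at hp ⊢
      obtain ⟨hb, hnq⟩ := hp
      simp only at hb ⊢
      have hpar := odd_parity x y N hb
      refine ⟨by linarith, ?_⟩
      simp only [hq] at hnq ⊢
      omega
    · rintro ⟨x, y⟩ hp
      rw [Finset.mem_filter, memB] at hp ⊢
      obtain ⟨hb, hnq⟩ := hp
      simp only at hb ⊢
      have hpar := odd_parity x y N hb
      refine ⟨by linarith, ?_⟩
      simp only [hq] at hnq ⊢
      omega
    · intro p _; simp
    · intro p _; simp
    · intro p _; simp only; ring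
  -- the filter sum equals the sum over A
  have hbij : ∑ p ∈ FB.filter q, (p.1 ^ 2 - 6 * p.1 * p.2 - 7 * p.2 ^ 2)
      = ∑ p ∈ FA, p.1 * p.2 := by
    apply Finset.sum_nbij (fun p => (p.1 - 7 * p.2, p.1 + p.2))
    · rintro ⟨X, Y⟩ hp
      rw [Finset.mem_filter, memB] at hp
      obtain ⟨hb, hq1⟩ := hp
      simp only at hb hq1 ⊢
      rw [memA]
      simp only [hq] at hq1
      refine ⟨by omega, by omega, by linear_combination 8 * hb⟩
    · rintro ⟨X, Y⟩ - ⟨X', Y'⟩ - h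
      simp only [Prod.mk.injEq] at h ⊢
      omega
    · rintro ⟨x, y⟩ hp
      rw [Finset.coe_filter]
      rw [Finset.mem_coe, memA] at hp
      obtain ⟨hx, hy, heq⟩ := hp
      simp only at hx hy heq
      have hdiv := key_div x y N hx hy heq
      obtain ⟨k, hk⟩ : ∃ k, y = x + 8 * k := ⟨(y - x) / 8, by omega⟩
      refine ⟨(x + 7 * k, k), ⟨?_, ?_⟩, by simp only [Prod.mk.injEq]; omega⟩
      · rw [memB]
        have h8 : (8 : ℤ) * ((x + 7 * k) ^ 2 + 7 * k ^ 2) = 8 * (2 * N + 1) := by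
          subst hk; linear_combination heq
        exact mul_left_cancel₀ (by norm_num) h8
      · simp only [hq]
        omega
    · rintro ⟨X, Y⟩ hp
      simp only
      ring
  have hsum : ∑ p ∈ FB, (p.1 ^ 2 - 6 * p.1 * p.2 - 7 * p.2 ^ 2)
      = ∑ p ∈ FB, (p.1 ^ 2 - 7 * p.2 ^ 2) - 6 * ∑ p ∈ FB, p.1 * p.2 := by
    rw [Finset.mul_sum, ← Finset.sum_sub_distrib]
    apply Finset.sum_congr rfl
    intro p _; ring
  rw [hneg, hbij] at hsplit
  rw [hXY] at hsum
  omega
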